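/- Let (S, dist_S) be a metric space with its Borel σ-algebra, A a measurable space, and p : S → A → ProbabilityMeasure S a measurable Markov kernel satisfying: for every (s,a) ∈ S×A and every 1-Lipschitz function f : S → ℝ integrable with respect to p(s,a), |∫ f d p(s,a) − f(s)| ≤ L_T. Fix d ∈ ℕ, a state s₁ ∈ S and actions a₁, …, a_d ∈ A, and let b_d be the belief: b₀ = δ_{s₁} and b_k = b_{k−1}.bind (s ↦ p(s, a_k)). Assume s ↦ dist_S(s, s₁) is b_d-integrable. Then the expected distance between two independent belief samples satisfies ∫_S ∫_S dist_S(s, s') d b_d(s) d b_d(s') ≤ 2 d L_T. -/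

import Mathlib

open MeasureTheory ENNReal

/-- The belief over the current state given a last observed state `s₁` and a queue of actions
`as = [a₁, …, a_d]`: the iterated bind of `δ_{s₁}` through the kernel `p` with the actions of
the queue, applied in order. -/
noncomputable def belief {S A : Type*} [MeasurableSpace S]
    (p : S → A → Measure S) (s₁ : S) (as : List A) : Measure S :=
  as.foldl (fun b a => b.bind fun s => p s a) (Measure.dirac s₁)

lemma belief_concat {S A : Type*} [MeasurableSpace S] [MeasurableSpace A]
    (p : S → A → Measure S) (s₁ : S) (as : List A) (a : A) :
    belief p s₁ (as ++ [a]) = (belief p s₁ as).bind (fun s => p s a) := by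
  simp [belief, List.foldl_append]

lemma belief_isProb {S A : Type*} [MeasurableSpace S] [MeasurableSpace A]
    (p : S → A → Measure S) (hp_prob : ∀ s a, IsProbabilityMeasure (p s a))
    (hp_meas : Measurable fun q : S × A => p q.1 q.2)
    (s₁ : S) (as : List A) : IsProbabilityMeasure (belief p s₁ as) := by
  induction as using List.reverseRecOn with
  | nil => simpa [belief] using Measure.dirac.isProbabilityMeasure
  | append_singleton as a ih =>
    rw [belief_concat]
    constructor
    rw [Measure.bind_apply MeasurableSet.univ
      (show Measurable (fun s => p s a) from hp_meas.comp measurable_prodMk_right).aemeasurable]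
    have : ∀ s : S, p s a Set.univ = 1 := fun s => (hp_prob s a).measure_univ
    simp only [this, lintegral_one]
    exact ih.measure_univ

/-- **Lemma (Time-Lipschitz bound).** In an `L_T`-time-Lipschitz MDP, the expected distance
between two independent samples of the belief after delay `d` is at most `2 d L_T`. -/
theorem sigma_b_tlc_bound {S A : Type*} [MetricSpace S] [MeasurableSpace S] [BorelSpace S]
    [MeasurableSpace A]
    (p : S → A → Measure S) (hp_prob : ∀ s a, IsProbabilityMeasure (p s a))
    (hp_meas : Measurable fun q : S × A => p q.1 q.2)
    (L_T : ℝ)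
    (hTLC : ∀ (s : S) (a : A), ∀ f : S → ℝ, LipschitzWith 1 f → Integrable f (p s a) →
      |(∫ y, f y ∂(p s a)) - f s| ≤ L_T)
    (s₁ : S) (as : List A)
    (hb_int : Integrable (fun s => dist s s₁) (belief p s₁ as)) :
    (∫ s', ∫ s, dist s s' ∂(belief p s₁ as) ∂(belief p s₁ as)) ≤
      2 * (as.length : ℝ) * L_T := by
  have hbp : IsProbabilityMeasure (belief p s₁ as) := belief_isProb p hp_prob hp_meas s₁ as
  set b := belief p s₁ as with hb
  -- truncated distance functions
  set g : ℕ → S → ℝ := fun n s => min (dist s s₁) n with hg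
  have hg_lip : ∀ n, LipschitzWith 1 (g n) := fun n =>
    by simpa using (LipschitzWith.dist_left s₁).min (LipschitzWith.const (n : ℝ))
  have hg_nonneg : ∀ n s, 0 ≤ g n s := fun n s => le_min dist_nonneg (Nat.cast_nonneg n)
  have hg_meas : ∀ n, Measurable (g n) := fun n => (hg_lip n).continuous.measurable
  have hg_int : ∀ n (μ : Measure S), IsProbabilityMeasure μ → Integrable (g n) μ := by
    intro n μ hμ
    refine ⟨(hg_meas n).aestronglyMeasurable, ?_⟩
    apply HasFiniteIntegral.of_bounded (C := (n : ℝ))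
    filter_upwards with s
    rw [Real.norm_eq_abs, abs_of_nonneg (hg_nonneg n s)]
    exact min_le_right _ _
  -- key: lintegral of truncated distance along beliefs
  have key : ∀ n (as' : List A),
      ∫⁻ s, ENNReal.ofReal (g n s) ∂(belief p s₁ as')
        ≤ (as'.length : ℝ≥0∞) * ENNReal.ofReal L_T := by
    intro n as'
    induction as' using List.reverseRecOn with
    | nil =>
      simp [belief, lintegral_dirac' _ ((hg_meas n).ennreal_ofReal), hg]
    | append_singleton as' a ih =>
      rw [belief_concat,
        Measure.lintegral_bind
          (show Measurable (fun s => p s a) from hp_meas.comp measurable_prodMk_right).aemeasurable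
          ((hg_meas n).ennreal_ofReal).aemeasurable]
      have step : ∀ s : S, ∫⁻ y, ENNReal.ofReal (g n y) ∂(p s a)
          ≤ ENNReal.ofReal (g n s) + ENNReal.ofReal L_T := by
        intro s
        have hint := hg_int n (p s a) (hp_prob s a)
        rw [← ofReal_integral_eq_lintegral_ofReal hint
          (Filter.Eventually.of_forall (hg_nonneg n))]
        have h1 : ∫ y, g n y ∂(p s a) ≤ g n s + L_T := by
          have := hTLC s a (g n) (hg_lip n) hint
          linarith [abs_le.mp this |>.2]
        calc ENNReal.ofReal (∫ y, g n y ∂(p s a)) ≤ ENNReal.ofReal (g n s + L_T) :=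
              ENNReal.ofReal_le_ofReal h1
          _ ≤ ENNReal.ofReal (g n s) + ENNReal.ofReal L_T := ENNReal.ofReal_add_le
      calc ∫⁻ s, (∫⁻ y, ENNReal.ofReal (g n y) ∂(p s a)) ∂(belief p s₁ as')
          ≤ ∫⁻ s, (ENNReal.ofReal (g n s) + ENNReal.ofReal L_T) ∂(belief p s₁ as') :=
            lintegral_mono step
        _ = (∫⁻ s, ENNReal.ofReal (g n s) ∂(belief p s₁ as')) + ENNReal.ofReal L_T := by
            rw [lintegral_add_right _ measurable_const, lintegral_const,
              (belief_isProb p hp_prob hp_meas s₁ as').measure_univ, mul_one]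
        _ ≤ (as'.length : ℝ≥0∞) * ENNReal.ofReal L_T + ENNReal.ofReal L_T :=
            add_le_add_left ih _
        _ = ((as' ++ [a]).length : ℝ≥0∞) * ENNReal.ofReal L_T := by
            simp [add_mul, Nat.cast_add]
  -- pass to the limit: the full distance
  have hC : ∫ s, dist s s₁ ∂b ≤ (as.length : ℝ) * L_T := by
    rcases as with _ | ⟨a, as'⟩
    · simp [hb, belief, integral_dirac' _ _ (measurable_dist.comp
        (measurable_id.prodMk measurable_const)).stronglyMeasurable]
    have hLT : 0 ≤ L_T := by
      have := hTLC s₁ a (fun _ => 0) ((LipschitzWith.const 0).weaken zero_le_one)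
        (integrable_const 0)
      simpa using this
    have hmono : ∫⁻ s, ENNReal.ofReal (dist s s₁) ∂b
        = ⨆ n, ∫⁻ s, ENNReal.ofReal (g n s) ∂b := by
      rw [← lintegral_iSup (fun n => (hg_meas n).ennreal_ofReal)]
      · congr 1; ext s
        apply le_antisymm
        · obtain ⟨n, hn⟩ := exists_nat_ge (dist s s₁)
          calc ENNReal.ofReal (dist s s₁) = ENNReal.ofReal (g n s) := by
                simp [hg, min_eq_left hn]
            _ ≤ ⨆ m, ENNReal.ofReal (g m s) := le_iSup (fun m => ENNReal.ofReal (g m s)) n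
        · exact iSup_le fun n => ENNReal.ofReal_le_ofReal (min_le_left _ _)
      · intro i j hij s
        exact ENNReal.ofReal_le_ofReal (le_min (min_le_left _ _)
          (le_trans (min_le_right _ _) (by exact_mod_cast hij)))
    have hle : ∫⁻ s, ENNReal.ofReal (dist s s₁) ∂b
        ≤ (((a :: as').length : ℕ) : ℝ≥0∞) * ENNReal.ofReal L_T := by
      rw [hmono]; exact iSup_le fun n => key n _
    rw [← ofReal_integral_eq_lintegral_ofReal hb_int
      (Filter.Eventually.of_forall fun s => dist_nonneg)] at hle
    have heq : (((a :: as').length : ℕ) : ℝ≥0∞) * ENNReal.ofReal L_T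
        = ENNReal.ofReal ((((a :: as').length : ℕ) : ℝ) * L_T) := by
      rw [ENNReal.ofReal_mul (Nat.cast_nonneg _), ENNReal.ofReal_natCast]
    rw [heq] at hle
    exact (ENNReal.ofReal_le_ofReal_iff (by positivity)).mp hle
  set C := ∫ s, dist s s₁ ∂b with hCdef
  have hC0 : 0 ≤ C := integral_nonneg fun s => dist_nonneg
  have hb_int' : Integrable (fun s => dist s₁ s) b := by
    simpa [dist_comm] using hb_int
  -- inner bound
  have hinner : ∀ s' : S, ∫ s, dist s s' ∂b ≤ C + dist s₁ s' := by
    intro s'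
    have hdom : Integrable (fun s => dist s s₁ + dist s₁ s') b :=
      hb_int.add (integrable_const _)
    calc ∫ s, dist s s' ∂b ≤ ∫ s, (dist s s₁ + dist s₁ s') ∂b := by
          refine integral_mono_of_nonneg (Filter.Eventually.of_forall fun s => dist_nonneg)
            hdom (Filter.Eventually.of_forall fun s => dist_triangle s s₁ s')
      _ = C + dist s₁ s' := by
          rw [integral_add hb_int (integrable_const _), integral_const]
          simp [hbp.measure_univ, hCdef]
  calc (∫ s', ∫ s, dist s s' ∂b ∂b) ≤ ∫ s', (C + dist s₁ s') ∂b := by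
        refine integral_mono_of_nonneg
          (Filter.Eventually.of_forall fun s' => integral_nonneg fun s => dist_nonneg)
          ((integrable_const C).add hb_int') (Filter.Eventually.of_forall hinner)
    _ = C + C := by
        rw [integral_add (integrable_const _) hb_int', integral_const]
        simp [hbp.measure_univ, hCdef, dist_comm]
    _ ≤ 2 * (as.length : ℝ) * L_T := by linarith [hC]
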